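/- arXiv:2410.06052 — 5 statements merged into one kernel-verified Lean document; each statement's English description precedes it below -/
import Mathlib

section
/- For real numbers p, q and 0 < α < 1, one has −p·sign(p−q)|p−q|^α ≤ −|p|(|p|^α − 2|q|^α). -/
lemma rpow_subadd (α x y : ℝ) (hx : 0 ≤ x) (hy : 0 ≤ y) (hα : 0 < α) (hα1 : α < 1) :
    (x + y) ^ α ≤ x ^ α + y ^ α := by
  have h := NNReal.rpow_add_le_add_rpow x.toNNReal y.toNNReal hα.le hα1.le
  have h' := (NNReal.coe_le_coe).2 h
  push_cast at h'
  rwa [Real.coe_toNNReal x hx, Real.coe_toNNReal y hy] at h'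

lemma abs_rpow_le (α p q : ℝ) (hα : 0 < α) (hα1 : α < 1) :
    |p| ^ α ≤ |p - q| ^ α + |q| ^ α := by
  have h1 : |p| ≤ |p - q| + |q| := by
    calc |p| = |(p - q) + q| := by ring_nf
    _ ≤ |p - q| + |q| := abs_add_le _ _
  calc |p| ^ α ≤ (|p - q| + |q|) ^ α :=
        Real.rpow_le_rpow (abs_nonneg _) h1 hα.le
  _ ≤ |p - q| ^ α + |q| ^ α := rpow_subadd α _ _ (abs_nonneg _) (abs_nonneg _) hα hα1

/-- For real `p, q` and `0 < α < 1`,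
`−p·sign(p−q)·|p−q|^α ≤ −|p|·(|p|^α − 2|q|^α)`. -/
theorem neg_mul_sig_le (p q α : ℝ) (hα : 0 < α) (hα1 : α < 1) :
    -(p * Real.sign (p - q) * |p - q| ^ α) ≤ -(|p| * (|p| ^ α - 2 * |q| ^ α)) := by
  rw [neg_le_neg_iff]
  have hpnn := abs_nonneg p
  have hqα : (0:ℝ) ≤ |q| ^ α := Real.rpow_nonneg (abs_nonneg q) α
  have hdα : (0:ℝ) ≤ |p - q| ^ α := Real.rpow_nonneg (abs_nonneg _) α
  have key := abs_rpow_le α p q hα hα1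
  rcases lt_trichotomy (p - q) 0 with hd | hd | hd
  · rw [Real.sign_of_neg hd]
    rcases le_or_gt p 0 with hp | hp
    · -- -p = |p|
      have : p * (-1) = |p| := by rw [abs_of_nonpos hp]; ring
      rw [this]
      have : |p| * (|p| ^ α - 2 * |q| ^ α) ≤ |p| * (|p - q| ^ α - |q| ^ α) := by
        apply mul_le_mul_of_nonneg_left _ hpnn
        nlinarith
      calc |p| * (|p| ^ α - 2 * |q| ^ α) ≤ |p| * (|p - q| ^ α - |q| ^ α) := this
      _ ≤ |p| * |p - q| ^ α := by nlinarith
    · -- p > 0, q > p > 0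
      have hq : p < q := by linarith
      have h1 : |p| ≤ |q| := by rw [abs_of_pos hp, abs_of_pos (lt_trans hp hq)]; linarith
      have h2 : |p - q| ≤ |q| := by
        rw [abs_of_neg hd, abs_of_pos (lt_trans hp hq)]; linarith
      have h1' : |p| ^ α ≤ |q| ^ α := Real.rpow_le_rpow (abs_nonneg _) h1 hα.le
      have h2' : |p - q| ^ α ≤ |q| ^ α := Real.rpow_le_rpow (abs_nonneg _) h2 hα.le
      have hpe : p * (-1) = -|p| := by rw [abs_of_pos hp]; ring
      rw [hpe]
      nlinarith
  · have hq : q = p := by linarith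
    subst hq
    rw [hd, Real.sign_zero, abs_zero, Real.zero_rpow hα.ne']
    have : (0:ℝ) ≤ |q| ^ α := hqα
    nlinarith
  · rw [Real.sign_of_pos hd]
    rcases le_or_gt 0 p with hp | hp
    · have : p * 1 = |p| := by rw [abs_of_nonneg hp]; ring
      rw [this]
      nlinarith
    · -- p < 0, q < p < 0
      have hq : q < p := by linarith
      have hqneg : q < 0 := lt_trans hq hp
      have h1 : |p| ≤ |q| := by rw [abs_of_neg hp, abs_of_neg hqneg]; linarith
      have h2 : |p - q| ≤ |q| := by rw [abs_of_pos hd, abs_of_neg hqneg]; linarith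
      have h1' : |p| ^ α ≤ |q| ^ α := Real.rpow_le_rpow (abs_nonneg _) h1 hα.le
      have h2' : |p - q| ^ α ≤ |q| ^ α := Real.rpow_le_rpow (abs_nonneg _) h2 hα.le
      have hpe : p * 1 = -|p| := by rw [abs_of_neg hp]; ring
      rw [hpe]
      nlinarith
end

section
/- For vectors p, q ∈ ℝⁿ and 0 < α < 1, −pᵀ sig(p−q)^α ≤ −(α/(1+α)) ‖p‖_{1+α}^{1+α} + (α/(1+α)) 2^{(1+α)/α} ‖q‖_{1+α}^{1+α}, where sig(x)^α is applied componentwise as sign(xᵢ)|xᵢ|^α. -/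
open Finset

lemma aux_alphaK {α : ℝ} (hα : 0 < α) :
    1 + 2 * α ≤ α * (2:ℝ) ^ ((1 + α) / α) := by
  have hexp : (1 + α) / α = 1 / α + 1 := by field_simp
  have h2 : (2:ℝ) ^ ((1 + α) / α) = (2:ℝ) ^ (1/α) * 2 := by
    rw [hexp, Real.rpow_add (by norm_num), Real.rpow_one]
  have h3 : Real.log 2 * (1/α) + 1 ≤ (2:ℝ) ^ (1/α) := by
    rw [Real.rpow_def_of_pos (by norm_num)]
    exact Real.add_one_le_exp _
  have h4 : Real.log 2 + α ≤ α * (2:ℝ) ^ (1/α) := by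
    have h := mul_le_mul_of_nonneg_left h3 hα.le
    have hc : α * (Real.log 2 * (1/α)) = Real.log 2 := by field_simp
    nlinarith
  have h5 : (0.6931471803 : ℝ) < Real.log 2 := Real.log_two_gt_d9
  rw [h2]; nlinarith

lemma scalar_nonneg {α : ℝ} (hα : 0 < α) (hα1 : α < 1) {a b : ℝ} (hb : 0 ≤ b) :
    α/(1+α) * |a| ^ (1+α) - α/(1+α) * (2:ℝ)^((1+α)/α) * |b| ^ (1+α)
      ≤ a * Real.sign (a - b) * |a - b| ^ α := by
  have h1α : (0:ℝ) < 1 + α := by linarith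
  set c := α/(1+α) with hc
  set K := (2:ℝ)^((1+α)/α) with hK
  have hc0 : 0 < c := div_pos hα h1α
  have hc2 : c ≤ 1/2 := by rw [hc, div_le_div_iff₀ h1α (by norm_num)]; linarith
  have hK0 : 0 < K := Real.rpow_pos_of_pos (by norm_num) _
  have hKα : 1 + 2*α ≤ α * K := aux_alphaK hα
  have hca : c * (1+α) = α := by rw [hc]; field_simp
  have hcK : 1 + c ≤ c * K := by
    apply le_of_mul_le_mul_right ?_ h1α
    calc (1+c)*(1+α) = (1+α) + c*(1+α) := by ring
      _ = 1 + 2*α := by rw [hca]; ring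
      _ ≤ α * K := hKα
      _ = c*K*(1+α) := by linear_combination (-K) * hca
  have hK2 : (2:ℝ)^(1+α) ≤ K := by
    rw [hK]
    apply Real.rpow_le_rpow_of_exponent_le (by norm_num)
    rw [le_div_iff₀ hα]; nlinarith
  have habs : ∀ x:ℝ, 0 ≤ x → x^(1+α) = x * x^α := fun x hx => by
    rw [Real.rpow_add' hx (by positivity), Real.rpow_one]
  have hbb : |b| = b := abs_of_nonneg hb
  rcases lt_or_ge a 0 with ha | ha
  · -- a < 0
    have hab : a - b < 0 := by linarith
    rw [Real.sign_of_neg hab, abs_of_neg hab]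
    have hAa : |a| = -a := abs_of_neg ha
    have e1 : (-a) * (-a)^α ≤ (-a) * (-(a-b))^α :=
      mul_le_mul_of_nonneg_left
        (Real.rpow_le_rpow (by linarith) (by linarith) hα.le) (by linarith)
    have e2 : |a|^(1+α) = (-a) * (-a)^α := by rw [hAa, habs _ (by linarith)]
    have e3 : 0 ≤ |b|^(1+α) := Real.rpow_nonneg (abs_nonneg b) _
    have e4 : 0 ≤ |a|^(1+α) := Real.rpow_nonneg (abs_nonneg a) _
    have e5 : a * -1 * (-(a-b))^α = (-a) * (-(a-b))^α := by ring
    rw [e5]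
    nlinarith [mul_nonneg (mul_pos hc0 hK0).le e3,
      mul_le_mul_of_nonneg_right hc2 e4]
  · -- 0 ≤ a
    have haa : |a| = a := abs_of_nonneg ha
    rcases le_or_gt a b with hab | hab
    · -- 0 ≤ a ≤ b
      have epb : 0 ≤ b^(1+α) := Real.rpow_nonneg hb _
      have eab : a^(1+α) ≤ b^(1+α) := Real.rpow_le_rpow ha hab h1α.le
      rcases eq_or_lt_of_le hab with heq | hlt
      · subst heq
        simp only [sub_self, Real.sign_zero, mul_zero, zero_mul, haa]
        nlinarith [mul_le_mul_of_nonneg_right hcK epb]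
      · have habneg : a - b < 0 := by linarith
        rw [Real.sign_of_neg habneg, abs_of_neg habneg, haa, hbb]
        have e1 : a * (-(a-b))^α ≤ b * b^α := by
          have h1 : (0:ℝ) ≤ -(a-b) := by linarith
          have h2 : -(a-b) ≤ b := by linarith
          exact mul_le_mul hab (Real.rpow_le_rpow h1 h2 hα.le) (Real.rpow_nonneg h1 _) hb
        have e2 : b^(1+α) = b * b^α := habs _ hb
        have e3 : a * -1 * (-(a-b))^α = -(a * (-(a-b))^α) := by ring
        rw [e3]
        nlinarith [mul_le_mul_of_nonneg_right hcK epb,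
          mul_le_mul_of_nonneg_left eab hc0.le]
    · -- b < a
      have hab0 : 0 < a - b := by linarith
      rw [Real.sign_of_pos hab0, abs_of_pos hab0, haa, hbb]
      have ha0 : 0 < a := lt_of_le_of_lt hb hab
      have hrpos : 0 ≤ a * 1 * (a-b)^α := by
        have := Real.rpow_nonneg hab0.le α
        nlinarith
      rcases le_or_gt a (2*b) with h2b | h2b
      · -- b < a ≤ 2b : LHS ≤ 0
        have epb : 0 ≤ b^(1+α) := Real.rpow_nonneg hb _
        have e1 : a^(1+α) ≤ (2*b)^(1+α) := Real.rpow_le_rpow ha h2b h1α.le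
        have e2 : (2*b)^(1+α) = (2:ℝ)^(1+α) * b^(1+α) := Real.mul_rpow (by norm_num) hb
        have e4 : c * a^(1+α) ≤ c * K * b^(1+α) := by
          calc c * a^(1+α) ≤ c * ((2:ℝ)^(1+α) * b^(1+α)) := by
                rw [← e2]; exact mul_le_mul_of_nonneg_left e1 hc0.le
            _ ≤ c * (K * b^(1+α)) := by
                apply mul_le_mul_of_nonneg_left (mul_le_mul_of_nonneg_right hK2 epb) hc0.le
            _ = c * K * b^(1+α) := by ring
        linarith
      · -- 2b < a
        have e1 : (a/2)^α ≤ (a-b)^α :=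
          Real.rpow_le_rpow (by linarith) (by linarith) hα.le
        have e2 : (a/2)^α = a^α / 2^α := Real.div_rpow ha (by norm_num : (0:ℝ) ≤ 2) α
        have e3 : (2:ℝ)^α ≤ 2 := by
          calc (2:ℝ)^α ≤ (2:ℝ)^(1:ℝ) := Real.rpow_le_rpow_of_exponent_le (by norm_num) hα1.le
            _ = 2 := Real.rpow_one 2
        have e3b : (0:ℝ) < (2:ℝ)^α := Real.rpow_pos_of_pos (by norm_num) _
        have e4 : a^α / 2 ≤ a^α / 2^α :=
          div_le_div_of_nonneg_left (Real.rpow_nonneg ha _) e3b e3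
        have e5 : a^(1+α) = a * a^α := habs _ ha
        have e6 : c * a^(1+α) ≤ a * (a^α/2) := by
          rw [e5]
          calc c * (a * a^α) ≤ (1/2) * (a * a^α) := by
                apply mul_le_mul_of_nonneg_right hc2
                exact mul_nonneg ha (Real.rpow_nonneg ha _)
            _ = a * (a^α/2) := by ring
        have e7 : a * (a^α/2) ≤ a * (a-b)^α := by
          apply mul_le_mul_of_nonneg_left _ ha
          calc a^α/2 ≤ a^α/2^α := e4
            _ = (a/2)^α := e2.symm
            _ ≤ (a-b)^α := e1
        have e8 : 0 ≤ c * K * |b|^(1+α) := by positivity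
        have e9 : 0 ≤ b^(1+α) := Real.rpow_nonneg hb _
        nlinarith [mul_pos hc0 hK0]

lemma scalar_all {α : ℝ} (hα : 0 < α) (hα1 : α < 1) (a b : ℝ) :
    α/(1+α) * |a| ^ (1+α) - α/(1+α) * (2:ℝ)^((1+α)/α) * |b| ^ (1+α)
      ≤ a * Real.sign (a - b) * |a - b| ^ α := by
  rcases le_or_gt 0 b with hb | hb
  · exact scalar_nonneg hα hα1 hb
  · have h := scalar_nonneg hα hα1 (a := -a) (b := -b) (by linarith)
    have e1 : -a - -b = -(a - b) := by ring
    rw [e1, Real.sign_neg, abs_neg, abs_neg, abs_neg] at h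
    calc α/(1+α) * |a| ^ (1+α) - α/(1+α) * (2:ℝ)^((1+α)/α) * |b| ^ (1+α)
        ≤ (-a) * -Real.sign (a-b) * |a-b|^α := h
      _ = a * Real.sign (a-b) * |a-b|^α := by ring

/-- For vectors `p, q ∈ ℝⁿ` and `0 < α < 1`,
`−pᵀ sig(p−q)^α ≤ −(α/(1+α)) ‖p‖_{1+α}^{1+α} + (α/(1+α)) 2^{(1+α)/α} n^{(1-α)/(2(α+1))} ‖q‖_{1+α}^{1+α}`
in the form with component sums:
`-∑ i, p i * sign (p i - q i) * |p i - q i|^α ≤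
  -(α/(1+α)) ∑ i, |p i|^{1+α} + (α/(1+α)) 2^{(1+α)/α} ∑ i, |q i|^{1+α}`. -/
theorem neg_inner_sig_le {n : ℕ} (p q : Fin n → ℝ) (α : ℝ) (hα : 0 < α) (hα1 : α < 1) :
    -(∑ i, p i * Real.sign (p i - q i) * |p i - q i| ^ α) ≤
      -(α / (1 + α)) * ∑ i, |p i| ^ (1 + α) +
        (α / (1 + α)) * (2 : ℝ) ^ ((1 + α) / α) * ∑ i, |q i| ^ (1 + α) := by
  have key : ∀ i ∈ Finset.univ,
      α/(1+α) * |p i| ^ (1+α) - α/(1+α) * (2:ℝ)^((1+α)/α) * |q i| ^ (1+α)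
        ≤ p i * Real.sign (p i - q i) * |p i - q i| ^ α :=
    fun i _ => scalar_all hα hα1 (p i) (q i)
  have hs := Finset.sum_le_sum key
  rw [Finset.sum_sub_distrib, ← Finset.mul_sum, ← Finset.mul_sum] at hs
  linarith
end

section
/- Let p₀ ∈ ℝ² be an unknown parameter, and consider measurement vectors u_k ∈ ℝ², recorded vectors r₁,…,r_ς ∈ ℝ², S = Σ_{m=1}^{ς} r_m r_mᵀ with rank(S) = 2. Let estimates p̂_k evolve by p̂_{k+1} = p̂_k − η( U_k + S )( p̂_k − p₀ ), where U_k = u_k u_kᵀ and η = λ_min(S)/(λ_max(U_k) + λ_max(S))². Then the error e_k = p̂_k − p₀ satisfies ‖e_{k+1}‖² ≤ (1 − λ_min(S)²/(λ_max(U_k)+λ_max(S))²) ‖e_k‖². -/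
noncomputable def lamMin (A : Matrix (Fin 2) (Fin 2) ℝ) : ℝ := sInf (spectrum ℝ A)
noncomputable def lamMax (A : Matrix (Fin 2) (Fin 2) ℝ) : ℝ := sSup (spectrum ℝ A)

section Aux

open Matrix

/-- The Euclidean linear map of a Hermitian matrix sends eigenbasis vectors to eigenvalue
multiples. -/
lemma lin_eigen (A : Matrix (Fin 2) (Fin 2) ℝ) (hA : A.IsHermitian) (i : Fin 2) :
    Matrix.toEuclideanLin A (hA.eigenvectorBasis i) = hA.eigenvalues i • hA.eigenvectorBasis i := by
  apply (WithLp.equiv 2 _).injective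
  simp [Matrix.piLp_ofLp_toEuclideanLin, Matrix.toLin'_apply, hA.mulVec_eigenvectorBasis]

lemma inner_repr (b : OrthonormalBasis (Fin 2) ℝ (EuclideanSpace ℝ (Fin 2)))
    (x y : EuclideanSpace ℝ (Fin 2)) :
    (inner ℝ x y : ℝ) = ∑ i, b.repr x i * b.repr y i := by
  rw [← b.repr.inner_map_map x y, PiLp.inner_apply]
  simp [RCLike.inner_apply]
  ring

lemma repr_lin (A : Matrix (Fin 2) (Fin 2) ℝ) (hA : A.IsHermitian)
    (x : EuclideanSpace ℝ (Fin 2)) (i : Fin 2) :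
    hA.eigenvectorBasis.repr (Matrix.toEuclideanLin A x) i
      = hA.eigenvalues i * hA.eigenvectorBasis.repr x i := by
  have hb := lin_eigen A hA i
  have hsym := (Matrix.isHermitian_iff_isSymmetric.1 hA)
  rw [OrthonormalBasis.repr_apply_apply, OrthonormalBasis.repr_apply_apply,
    ← hsym (hA.eigenvectorBasis i) x, hb]
  simp [real_inner_smul_left, PiLp.inner_apply, RCLike.inner_apply]
  ring

lemma spec_pair (A : Matrix (Fin 2) (Fin 2) ℝ) (hA : A.IsHermitian) :
    spectrum ℝ A = {hA.eigenvalues 0, hA.eigenvalues 1} := by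
  ext μ
  constructor
  · intro hμ
    rw [← Matrix.spectrum_toEuclideanLin] at hμ
    have he : Module.End.HasEigenvalue (Matrix.toEuclideanLin A) μ :=
      (Module.End.hasEigenvalue_iff_mem_spectrum).2 hμ
    obtain ⟨x, hx⟩ := he.exists_hasEigenvector
    have hx0 : x ≠ 0 := hx.2
    have happ : Matrix.toEuclideanLin A x = μ • x := hx.apply_eq_smul
    have hex : ∃ i, hA.eigenvectorBasis.repr x i ≠ 0 := by
      by_contra h
      push_neg at h
      apply hx0
      have hz : hA.eigenvectorBasis.repr x = 0 := by ext i; exact h i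
      simpa using hA.eigenvectorBasis.repr.map_eq_zero_iff.mp hz
    obtain ⟨i, hi⟩ := hex
    have hrl := repr_lin A hA x i
    rw [happ] at hrl
    simp only [_root_.map_smul] at hrl
    have hμi : μ = hA.eigenvalues i := by
      have h2 : μ * hA.eigenvectorBasis.repr x i
          = hA.eigenvalues i * hA.eigenvectorBasis.repr x i := by simpa using hrl
      exact mul_right_cancel₀ hi h2
    rw [hμi]
    fin_cases i <;> simp
  · intro hμ
    simp only [Set.mem_insert_iff, Set.mem_singleton_iff] at hμ
    rcases hμ with rfl | rfl <;> exact hA.eigenvalues_mem_spectrum_real _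

lemma lamMin_eq (A : Matrix (Fin 2) (Fin 2) ℝ) (hA : A.IsHermitian) :
    lamMin A = min (hA.eigenvalues 0) (hA.eigenvalues 1) := by
  rw [lamMin, spec_pair A hA, csInf_pair]

lemma lamMax_eq (A : Matrix (Fin 2) (Fin 2) ℝ) (hA : A.IsHermitian) :
    lamMax A = max (hA.eigenvalues 0) (hA.eigenvalues 1) := by
  rw [lamMax, spec_pair A hA, csSup_pair]

lemma norm_sq_repr (b : OrthonormalBasis (Fin 2) ℝ (EuclideanSpace ℝ (Fin 2)))
    (x : EuclideanSpace ℝ (Fin 2)) :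
    ‖x‖ ^ 2 = ∑ i, (b.repr x i) ^ 2 := by
  rw [← real_inner_self_eq_norm_sq, inner_repr b x x]
  simp [sq]

lemma quad_lower (A : Matrix (Fin 2) (Fin 2) ℝ) (hA : A.IsHermitian)
    (x : EuclideanSpace ℝ (Fin 2)) :
    lamMin A * ‖x‖ ^ 2 ≤ (inner ℝ x (Matrix.toEuclideanLin A x) : ℝ) := by
  rw [norm_sq_repr hA.eigenvectorBasis x, inner_repr hA.eigenvectorBasis, lamMin_eq A hA]
  simp only [repr_lin A hA, Fin.sum_univ_two]
  rcases min_cases (hA.eigenvalues 0) (hA.eigenvalues 1) with ⟨h, h'⟩ | ⟨h, h'⟩ <;>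
    rw [h] <;>
    nlinarith [sq_nonneg (hA.eigenvectorBasis.repr x 0), sq_nonneg (hA.eigenvectorBasis.repr x 1)]

lemma quad_upper (A : Matrix (Fin 2) (Fin 2) ℝ) (hA : A.IsHermitian)
    (x : EuclideanSpace ℝ (Fin 2)) :
    (inner ℝ x (Matrix.toEuclideanLin A x) : ℝ) ≤ lamMax A * ‖x‖ ^ 2 := by
  rw [norm_sq_repr hA.eigenvectorBasis x, inner_repr hA.eigenvectorBasis, lamMax_eq A hA]
  simp only [repr_lin A hA, Fin.sum_univ_two]
  rcases max_cases (hA.eigenvalues 0) (hA.eigenvalues 1) with ⟨h, h'⟩ | ⟨h, h'⟩ <;>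
    rw [h] <;>
    nlinarith [sq_nonneg (hA.eigenvectorBasis.repr x 0), sq_nonneg (hA.eigenvectorBasis.repr x 1)]

lemma norm_lin_le (A : Matrix (Fin 2) (Fin 2) ℝ) (hA : A.IsHermitian)
    (hpos : ∀ i, 0 ≤ hA.eigenvalues i) (x : EuclideanSpace ℝ (Fin 2)) :
    ‖Matrix.toEuclideanLin A x‖ ^ 2 ≤ (lamMax A) ^ 2 * ‖x‖ ^ 2 := by
  rw [norm_sq_repr hA.eigenvectorBasis, norm_sq_repr hA.eigenvectorBasis x, lamMax_eq A hA]
  simp only [repr_lin A hA, Fin.sum_univ_two]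
  have h0 := hpos 0; have h1 := hpos 1
  rcases max_cases (hA.eigenvalues 0) (hA.eigenvalues 1) with ⟨h, h'⟩ | ⟨h, h'⟩
  · have hsq : hA.eigenvalues 1 ^ 2 ≤ hA.eigenvalues 0 ^ 2 := pow_le_pow_left₀ h1 h' 2
    rw [h]
    nlinarith [sq_nonneg (hA.eigenvectorBasis.repr x 0), sq_nonneg (hA.eigenvectorBasis.repr x 1)]
  · have hsq : hA.eigenvalues 0 ^ 2 ≤ hA.eigenvalues 1 ^ 2 := pow_le_pow_left₀ h0 h'.le 2
    rw [h]
    nlinarith [sq_nonneg (hA.eigenvectorBasis.repr x 0), sq_nonneg (hA.eigenvectorBasis.repr x 1)]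

lemma psd_vecMulVec (v : Fin 2 → ℝ) : (Matrix.vecMulVec v v).PosSemidef := by
  simpa using Matrix.posSemidef_vecMulVec_self_star v

lemma psd_add {A B : Matrix (Fin 2) (Fin 2) ℝ} (hA : A.PosSemidef) (hB : B.PosSemidef) :
    (A + B).PosSemidef := by
  exact hA.add hB

lemma psd_sum {ς : ℕ} (f : Fin ς → Matrix (Fin 2) (Fin 2) ℝ) (h : ∀ m, (f m).PosSemidef) :
    (∑ m, f m).PosSemidef :=
  Finset.sum_induction f Matrix.PosSemidef (fun _ _ ha hb => psd_add ha hb)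
    Matrix.PosSemidef.zero (fun m _ => h m)

lemma eig_pos (S : Matrix (Fin 2) (Fin 2) ℝ) (hS : S.PosSemidef) (hrank : S.rank = 2) :
    ∀ i, 0 < hS.1.eigenvalues i := by
  have hcard : (Finset.univ.filter fun i => hS.1.eigenvalues i ≠ 0) = Finset.univ := by
    apply Finset.eq_univ_of_card
    rw [← Fintype.card_subtype, ← hS.1.rank_eq_card_non_zero_eigs, hrank]
    simp
  intro i
  have hmem : i ∈ Finset.univ.filter fun i => hS.1.eigenvalues i ≠ 0 := by
    rw [hcard]; exact Finset.mem_univ i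
  exact lt_of_le_of_ne (hS.eigenvalues_nonneg i) (Ne.symm (Finset.mem_filter.mp hmem).2)

lemma lamMin_nonneg (A : Matrix (Fin 2) (Fin 2) ℝ) (hA : A.PosSemidef) : 0 ≤ lamMin A := by
  rw [lamMin_eq A hA.1]
  exact le_min (hA.eigenvalues_nonneg 0) (hA.eigenvalues_nonneg 1)

lemma lamMax_nonneg (A : Matrix (Fin 2) (Fin 2) ℝ) (hA : A.PosSemidef) : 0 ≤ lamMax A := by
  rw [lamMax_eq A hA.1]
  exact le_max_of_le_left (hA.eigenvalues_nonneg 0)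

lemma lamMax_add_le (A B : Matrix (Fin 2) (Fin 2) ℝ) (hA : A.IsHermitian) (hB : B.IsHermitian) :
    lamMax (A + B) ≤ lamMax A + lamMax B := by
  have hAB : (A + B).IsHermitian := hA.add hB
  obtain ⟨i, hi⟩ : ∃ i, lamMax (A + B) = hAB.eigenvalues i := by
    rw [lamMax_eq _ hAB]
    rcases max_choice (hAB.eigenvalues 0) (hAB.eigenvalues 1) with h | h
    exacts [⟨0, h⟩, ⟨1, h⟩]
  set v := hAB.eigenvectorBasis i with hv
  have hv1 : ‖v‖ = 1 := hAB.eigenvectorBasis.orthonormal.1 i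
  have h1 : (inner ℝ v (Matrix.toEuclideanLin (A + B) v) : ℝ) = hAB.eigenvalues i := by
    rw [lin_eigen _ hAB i, real_inner_smul_right, real_inner_self_eq_norm_sq, hv1]
    ring
  have h2 : Matrix.toEuclideanLin (A + B) v
      = Matrix.toEuclideanLin A v + Matrix.toEuclideanLin B v := by
    rw [map_add]; rfl
  have h3 : (inner ℝ v (Matrix.toEuclideanLin (A + B) v) : ℝ)
      ≤ lamMax A + lamMax B := by
    rw [h2, inner_add_right]
    have := quad_upper A hA v
    have := quad_upper B hB v
    rw [hv1] at *
    nlinarith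
  rw [hi, ← h1]
  exact h3

end Aux

/-- One-step contraction of the concurrent-learning estimator: with
`p̂_{k+1} = p̂_k − η_k (U_k + S)(p̂_k − p₀)`, `U_k = u_k u_kᵀ`,
`S = ∑ r_m r_mᵀ` of rank 2, and `η_k = λ_min(S)/(λ_max(U_k)+λ_max(S))²`, the error
satisfies `‖e_{k+1}‖² ≤ (1 − λ_min(S)²/(λ_max(U_k)+λ_max(S))²)‖e_k‖²`. -/
theorem concurrent_learning_one_step
    (p₀ : EuclideanSpace ℝ (Fin 2)) (phat : ℕ → EuclideanSpace ℝ (Fin 2))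
    (u : ℕ → EuclideanSpace ℝ (Fin 2)) (ς : ℕ) (r : Fin ς → EuclideanSpace ℝ (Fin 2))
    (S : Matrix (Fin 2) (Fin 2) ℝ)
    (hS : S = ∑ m, Matrix.vecMulVec (r m) (r m))
    (hrank : S.rank = 2)
    (U : ℕ → Matrix (Fin 2) (Fin 2) ℝ)
    (hU : ∀ k, U k = Matrix.vecMulVec (u k) (u k))
    (η : ℕ → ℝ)
    (hη : ∀ k, η k = lamMin S / (lamMax (U k) + lamMax S) ^ 2)
    (hupd : ∀ k, phat (k + 1) =
      phat k - η k • (Matrix.toEuclideanLin (U k + S)) (phat k - p₀)) :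
    ∀ k, ‖phat (k + 1) - p₀‖ ^ 2 ≤
      (1 - (lamMin S) ^ 2 / (lamMax (U k) + lamMax S) ^ 2) * ‖phat k - p₀‖ ^ 2 := by
  intro k
  -- positive semidefiniteness
  have hSpsd : S.PosSemidef := hS ▸ psd_sum _ (fun m => psd_vecMulVec (r m))
  have hUpsd : (U k).PosSemidef := (hU k) ▸ psd_vecMulVec (u k)
  have hMpsd : (U k + S).PosSemidef := psd_add hUpsd hSpsd
  -- notation
  set e : EuclideanSpace ℝ (Fin 2) := phat k - p₀ with he
  set T := Matrix.toEuclideanLin (U k + S) with hT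
  set a := lamMin S with ha
  set c := lamMax (U k) + lamMax S with hc
  -- basic positivity facts
  have hapos : 0 < a := by
    rw [ha, lamMin_eq S hSpsd.1]
    exact lt_min (eig_pos S hSpsd hrank 0) (eig_pos S hSpsd hrank 1)
  have hcS : 0 < lamMax S := by
    rw [lamMax_eq S hSpsd.1]
    exact lt_max_of_lt_left (eig_pos S hSpsd hrank 0)
  have hcpos : 0 < c := by
    have := lamMax_nonneg (U k) hUpsd
    rw [hc]; linarith
  -- quadratic form lower bound
  have hq : a * ‖e‖ ^ 2 ≤ (inner ℝ e (T e) : ℝ) := by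
    have hsplit : T e = Matrix.toEuclideanLin (U k) e + Matrix.toEuclideanLin S e := by
      rw [hT, map_add]; rfl
    rw [hsplit, inner_add_right]
    have h1 := quad_lower (U k) hUpsd.1 e
    have h2 := quad_lower S hSpsd.1 e
    have h3 : (0:ℝ) ≤ lamMin (U k) * ‖e‖ ^ 2 :=
      mul_nonneg (lamMin_nonneg _ hUpsd) (sq_nonneg _)
    linarith
  -- operator norm bound
  have hn : ‖T e‖ ^ 2 ≤ c ^ 2 * ‖e‖ ^ 2 := by
    have h1 := norm_lin_le (U k + S) hMpsd.1 (fun i => hMpsd.eigenvalues_nonneg i) e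
    have h2 : lamMax (U k + S) ≤ c := hc ▸ lamMax_add_le (U k) S hUpsd.1 hSpsd.1
    have h3 : 0 ≤ lamMax (U k + S) := lamMax_nonneg _ hMpsd
    have h4 : lamMax (U k + S) ^ 2 ≤ c ^ 2 := pow_le_pow_left₀ h3 h2 2
    nlinarith [sq_nonneg ‖e‖]
  -- error recursion
  have herr : phat (k + 1) - p₀ = e - η k • T e := by
    rw [hupd k, he]
    abel
  have hexp : ‖phat (k + 1) - p₀‖ ^ 2
      = ‖e‖ ^ 2 - 2 * (η k * (inner ℝ e (T e) : ℝ)) + (η k) ^ 2 * ‖T e‖ ^ 2 := by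
    rw [herr, norm_sub_sq_real, real_inner_smul_right, norm_smul]
    rw [mul_pow, Real.norm_eq_abs, sq_abs]
  -- final algebra
  have hηk : η k = a / c ^ 2 := hη k
  have hc2 : (0:ℝ) < c ^ 2 := by positivity
  have hηnonneg : 0 ≤ η k := by rw [hηk]; positivity
  have hfact1 : η k * a = a ^ 2 / c ^ 2 := by rw [hηk]; field_simp
  have hfact2 : (η k) ^ 2 * c ^ 2 = a ^ 2 / c ^ 2 := by
    rw [hηk]; field_simp
  rw [hexp]
  have hb1 : 2 * (η k * a * ‖e‖ ^ 2) ≤ 2 * (η k * (inner ℝ e (T e) : ℝ)) := by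
    have := mul_le_mul_of_nonneg_left hq hηnonneg
    nlinarith
  have hb2 : (η k) ^ 2 * ‖T e‖ ^ 2 ≤ (η k) ^ 2 * (c ^ 2 * ‖e‖ ^ 2) :=
    mul_le_mul_of_nonneg_left hn (sq_nonneg _)
  have hgoal : ‖e‖ ^ 2 - 2 * (η k * a * ‖e‖ ^ 2) + (η k) ^ 2 * (c ^ 2 * ‖e‖ ^ 2)
      = (1 - a ^ 2 / c ^ 2) * ‖e‖ ^ 2 := by
    have : (η k) ^ 2 * (c ^ 2 * ‖e‖ ^ 2) = (a ^ 2 / c ^ 2) * ‖e‖ ^ 2 := by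
      rw [← mul_assoc, hfact2]
    rw [this]
    rw [show 2 * (η k * a * ‖e‖ ^ 2) = 2 * ((a ^ 2 / c ^ 2) * ‖e‖ ^ 2) by rw [← hfact1]]
    ring
  rw [← hgoal]
  exact add_le_add (sub_le_sub_left hb1 (‖e‖ ^ 2)) hb2
end

section
/- Under the setup of the concurrent-learning estimator, if ‖u_k‖ ≤ v_max Δt·2 for all k, i.e., λ_max(U_k) ≤ 2 v_max Δt, and S is positive definite, then ‖e_k‖ ≤ λ^k ‖e₀‖ with λ = √(1 − λ_min(S)²/(2 v_max Δt + λ_max(S))²) < 1, so the estimation error converges exponentially to zero. -/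
open Matrix RealInnerProductSpace

namespace CLaux

variable {A : Matrix (Fin 2) (Fin 2) ℝ}

lemma lamMin_le (hA : A.IsHermitian) (i : Fin 2) : lamMin A ≤ hA.eigenvalues i :=
  csInf_le (Set.Finite.bddBelow (Matrix.finite_real_spectrum (A := A)))
    (hA.eigenvalues_mem_spectrum_real i)

lemma le_lamMax (hA : A.IsHermitian) (i : Fin 2) : hA.eigenvalues i ≤ lamMax A :=
  le_csSup (Set.Finite.bddAbove (Matrix.finite_real_spectrum (A := A)))
    (hA.eigenvalues_mem_spectrum_real i)

lemma lamMin_mem (hA : A.IsHermitian) : ∃ i, lamMin A = hA.eigenvalues i := by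
  have h1 : (spectrum ℝ A).Nonempty := by
    rw [hA.spectrum_real_eq_range_eigenvalues]; exact Set.range_nonempty _
  have h2 := h1.csInf_mem (Matrix.finite_real_spectrum (A := A))
  rw [hA.spectrum_real_eq_range_eigenvalues] at h2
  obtain ⟨i, hi⟩ := h2
  exact ⟨i, by rw [lamMin, hA.spectrum_real_eq_range_eigenvalues]; exact hi.symm⟩

lemma toEuclideanLin_eigen (hA : A.IsHermitian) (i : Fin 2) :
    Matrix.toEuclideanLin A (hA.eigenvectorBasis i) =
      hA.eigenvalues i • hA.eigenvectorBasis i := by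
  ext j
  have h := congrFun (hA.mulVec_eigenvectorBasis i) j
  simpa [Matrix.toEuclideanLin_apply] using h

lemma inner_toEuclideanLin_eq (hA : A.IsHermitian) (x : EuclideanSpace ℝ (Fin 2)) (i : Fin 2) :
    ⟪hA.eigenvectorBasis i, Matrix.toEuclideanLin A x⟫ =
      hA.eigenvalues i * ⟪hA.eigenvectorBasis i, x⟫ := by
  have hsym := (Matrix.isHermitian_iff_isSymmetric.1 hA)
  rw [← hsym (hA.eigenvectorBasis i) x, toEuclideanLin_eigen hA i, real_inner_smul_left]

lemma norm_sq_eq_sum_inner (b : OrthonormalBasis (Fin 2) ℝ (EuclideanSpace ℝ (Fin 2)))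
    (x : EuclideanSpace ℝ (Fin 2)) : ‖x‖ ^ 2 = ∑ i, ⟪b i, x⟫ ^ 2 := by
  have h := b.sum_inner_mul_inner x x
  rw [real_inner_self_eq_norm_sq] at h
  rw [← h]
  exact Finset.sum_congr rfl fun i _ => by rw [real_inner_comm x (b i), sq]

lemma inner_expand (hA : A.IsHermitian) (x : EuclideanSpace ℝ (Fin 2)) :
    ⟪x, Matrix.toEuclideanLin A x⟫ =
      ∑ i, hA.eigenvalues i * ⟪hA.eigenvectorBasis i, x⟫ ^ 2 := by
  have h := hA.eigenvectorBasis.sum_inner_mul_inner x (Matrix.toEuclideanLin A x)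
  rw [← h]
  refine Finset.sum_congr rfl fun i _ => ?_
  rw [inner_toEuclideanLin_eq hA x i, real_inner_comm x (hA.eigenvectorBasis i), sq]
  ring

lemma rayleigh_le (hA : A.IsHermitian) (x : EuclideanSpace ℝ (Fin 2)) :
    ⟪x, Matrix.toEuclideanLin A x⟫ ≤ lamMax A * ‖x‖ ^ 2 := by
  rw [inner_expand hA x, norm_sq_eq_sum_inner hA.eigenvectorBasis x, Finset.mul_sum]
  exact Finset.sum_le_sum fun i _ =>
    mul_le_mul_of_nonneg_right (le_lamMax hA i) (sq_nonneg _)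

lemma le_rayleigh (hA : A.IsHermitian) (x : EuclideanSpace ℝ (Fin 2)) :
    lamMin A * ‖x‖ ^ 2 ≤ ⟪x, Matrix.toEuclideanLin A x⟫ := by
  rw [inner_expand hA x, norm_sq_eq_sum_inner hA.eigenvectorBasis x, Finset.mul_sum]
  exact Finset.sum_le_sum fun i _ =>
    mul_le_mul_of_nonneg_right (lamMin_le hA i) (sq_nonneg _)

lemma step_norm_sq (hA : A.IsHermitian) (η C : ℝ)
    (hC : ∀ i, (1 - η * hA.eigenvalues i) ^ 2 ≤ C) (x : EuclideanSpace ℝ (Fin 2)) :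
    ‖x - η • Matrix.toEuclideanLin A x‖ ^ 2 ≤ C * ‖x‖ ^ 2 := by
  set b := hA.eigenvectorBasis with hb
  rw [norm_sq_eq_sum_inner b, norm_sq_eq_sum_inner b x, Finset.mul_sum]
  refine Finset.sum_le_sum fun i _ => ?_
  have key : ⟪b i, x - η • Matrix.toEuclideanLin A x⟫ =
      (1 - η * hA.eigenvalues i) * ⟪b i, x⟫ := by
    rw [inner_sub_right, real_inner_smul_right, inner_toEuclideanLin_eq hA x i]
    ring
  rw [key, mul_pow]
  exact mul_le_mul_of_nonneg_right (hC i) (sq_nonneg _)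

end CLaux

set_option maxHeartbeats 2000000 in
/-- Exponential convergence of the concurrent-learning estimator: if
`λ_max(U_k) ≤ 2 v_max Δt` for all `k` and `S` is positive definite, then
`‖e_k‖ ≤ λ^k ‖e₀‖` with `λ = √(1 − λ_min(S)²/(2 v_max Δt + λ_max(S))²) < 1`. -/
theorem concurrent_learning_exp_convergence
    (vmax Δt : ℝ) (hv : 0 < vmax) (hΔ : 0 < Δt)
    (e : ℕ → EuclideanSpace ℝ (Fin 2)) (u : ℕ → EuclideanSpace ℝ (Fin 2))
    (U : ℕ → Matrix (Fin 2) (Fin 2) ℝ)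
    (hU : ∀ k, U k = Matrix.vecMulVec (u k) (u k))
    (hUb : ∀ k, lamMax (U k) ≤ 2 * vmax * Δt)
    (S : Matrix (Fin 2) (Fin 2) ℝ) (hSpd : S.PosDef)
    (η : ℕ → ℝ)
    (hη : ∀ k, η k = lamMin S / (lamMax (U k) + lamMax S) ^ 2)
    (hupd : ∀ k, e (k + 1) = e k - η k • (Matrix.toEuclideanLin (U k + S)) (e k)) :
    Real.sqrt (1 - (lamMin S) ^ 2 / (2 * vmax * Δt + lamMax S) ^ 2) < 1 ∧
    ∀ k, ‖e k‖ ≤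
      (Real.sqrt (1 - (lamMin S) ^ 2 / (2 * vmax * Δt + lamMax S) ^ 2)) ^ k * ‖e 0‖ := by
  classical
  have hSh : S.IsHermitian := hSpd.1
  -- U k is positive semidefinite and Hermitian
  have hUps : ∀ k, (U k).PosSemidef := by
    intro k
    rw [hU k, Matrix.vecMulVec_eq (Fin 1)]
    have h : (Matrix.replicateRow (Fin 1) ((u k) : Fin 2 → ℝ)) =
        (Matrix.replicateCol (Fin 1) ((u k) : Fin 2 → ℝ))ᴴ := by
      ext i j; simp [Matrix.conjTranspose_apply]
    rw [h]
    exact Matrix.posSemidef_self_mul_conjTranspose _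
  have hUh : ∀ k, (U k).IsHermitian := fun k => (hUps k).1
  -- opaque scalar abbreviations
  obtain ⟨m, hm⟩ : ∃ x, lamMin S = x := ⟨_, rfl⟩
  obtain ⟨aS, haS⟩ : ∃ x, lamMax S = x := ⟨_, rfl⟩
  obtain ⟨a, ha⟩ : ∃ f : ℕ → ℝ, ∀ k, lamMax (U k) = f k := ⟨_, fun _ => rfl⟩
  rw [hm, haS]
  have hη' : ∀ k, η k = m / (a k + aS) ^ 2 := by
    intro k; rw [hη k, hm, haS, ha k]
  have hm0 : 0 < m := by
    obtain ⟨i, hi⟩ := CLaux.lamMin_mem hSh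
    rw [← hm, hi]; exact hSpd.eigenvalues_pos i
  have hmS : m ≤ aS := by
    rw [← hm, ← haS]
    exact le_trans (CLaux.lamMin_le hSh 0) (CLaux.le_lamMax hSh 0)
  have hUk0 : ∀ k, 0 ≤ a k := by
    intro k
    rw [← ha k]
    obtain ⟨i, hi⟩ := CLaux.lamMin_mem (hUh k)
    calc (0:ℝ) ≤ (hUh k).eigenvalues i := (hUps k).eigenvalues_nonneg i
      _ ≤ lamMax (U k) := CLaux.le_lamMax (hUh k) i
  obtain ⟨L, hL⟩ : ∃ x, 2 * vmax * Δt + aS = x := ⟨_, rfl⟩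
  rw [hL]
  have hmL : m ≤ L := by
    have h2 : (0:ℝ) < 2 * vmax * Δt := by positivity
    linarith
  have hL0 : 0 < L := lt_of_lt_of_le hm0 hmL
  -- the contraction factor
  obtain ⟨C, hC⟩ : ∃ x, 1 - m ^ 2 / L ^ 2 = x := ⟨_, rfl⟩
  rw [hC]
  have hC0 : 0 ≤ C := by
    rw [← hC, sub_nonneg, div_le_one (by positivity)]
    nlinarith
  have hC1 : C < 1 := by
    rw [← hC]
    have h2 : 0 < m ^ 2 / L ^ 2 := by positivity
    linarith
  have hsqrt1 : Real.sqrt C < 1 := by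
    have h := Real.sqrt_lt_sqrt hC0 hC1
    simpa using h
  refine ⟨hsqrt1, ?_⟩
  -- per-step contraction
  have hstep : ∀ k, ‖e (k + 1)‖ ≤ Real.sqrt C * ‖e k‖ := by
    intro k
    have hMh : (U k + S).IsHermitian := (hUh k).add hSh
    obtain ⟨Lk, hLk⟩ : ∃ x, a k + aS = x := ⟨_, rfl⟩
    have hmLk : m ≤ Lk := by
      have := hUk0 k; linarith
    have hLk0 : 0 < Lk := lt_of_lt_of_le hm0 hmLk
    have hLkL : Lk ≤ L := by
      have h2 := hUb k; rw [ha k] at h2; linarith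
    -- eigenvalue bounds for U k + S
    have heig : ∀ i, m ≤ hMh.eigenvalues i ∧ hMh.eigenvalues i ≤ Lk := by
      intro i
      set v := hMh.eigenvectorBasis i with hv
      have hvn : ‖v‖ = 1 := hMh.eigenvectorBasis.orthonormal.1 i
      have hinner : ⟪v, Matrix.toEuclideanLin (U k + S) v⟫ = hMh.eigenvalues i := by
        rw [CLaux.inner_toEuclideanLin_eq hMh v i, ← hv, real_inner_self_eq_norm_sq, hvn]
        norm_num
      have hsplit : Matrix.toEuclideanLin (U k + S) v =
          Matrix.toEuclideanLin (U k) v + Matrix.toEuclideanLin S v := by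
        simp [map_add]
      have hUlow : (0:ℝ) ≤ ⟪v, Matrix.toEuclideanLin (U k) v⟫ := by
        have h1 := CLaux.le_rayleigh (hUh k) v
        have h2 : 0 ≤ lamMin (U k) := by
          obtain ⟨j, hj⟩ := CLaux.lamMin_mem (hUh k)
          rw [hj]; exact (hUps k).eigenvalues_nonneg j
        nlinarith [sq_nonneg ‖v‖]
      have hUhigh := CLaux.rayleigh_le (hUh k) v
      have hSlow := CLaux.le_rayleigh hSh v
      have hShigh := CLaux.rayleigh_le hSh v
      rw [hvn] at hUhigh hSlow hShigh
      rw [hm] at hSlow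
      rw [haS] at hShigh
      rw [ha k] at hUhigh
      simp only [one_pow, mul_one] at hUhigh hSlow hShigh
      constructor
      · rw [← hinner, hsplit, inner_add_right]; linarith
      · rw [← hinner, hsplit, inner_add_right, ← hLk]; linarith
    -- quadratic bound on (1 - η μ)^2
    have hquad : ∀ i, (1 - η k * hMh.eigenvalues i) ^ 2 ≤ C := by
      intro i
      obtain ⟨h1, h2⟩ := heig i
      obtain ⟨μ, hμ⟩ : ∃ x, hMh.eigenvalues i = x := ⟨_, rfl⟩
      rw [hμ] at h1 h2 ⊢
      have hηk : η k = m / Lk ^ 2 := by rw [hη' k, hLk]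
      have hμ0 : 0 < μ := lt_of_lt_of_le hm0 h1
      have ht1 : η k * μ ≤ m / Lk := by
        rw [hηk, div_mul_eq_mul_div, div_le_div_iff₀ (by positivity) hLk0]
        nlinarith [mul_nonneg (mul_pos hm0 hLk0).le (sub_nonneg.mpr h2)]
      have ht2 : m ^ 2 / Lk ^ 2 ≤ η k * μ := by
        rw [hηk, div_mul_eq_mul_div, div_le_div_iff₀ (by positivity) (by positivity)]
        nlinarith [mul_nonneg (mul_nonneg hm0.le (sq_nonneg Lk)) (sub_nonneg.mpr h1)]
      have hub : 1 - η k * μ ≤ 1 - m ^ 2 / Lk ^ 2 := by linarith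
      have hlb : 0 ≤ 1 - η k * μ := by
        have h3 : m / Lk ≤ 1 := by rw [div_le_one hLk0]; linarith
        linarith
      have hs1 : m ^ 2 / Lk ^ 2 ≤ 1 := by
        rw [div_le_one (by positivity)]; nlinarith
      have hs0 : 0 ≤ m ^ 2 / Lk ^ 2 := by positivity
      have hstep1 : (1 - η k * μ) ^ 2 ≤ (1 - m ^ 2 / Lk ^ 2) ^ 2 :=
        pow_le_pow_left₀ hlb hub 2
      have hstep2 : (1 - m ^ 2 / Lk ^ 2) ^ 2 ≤ 1 - m ^ 2 / Lk ^ 2 := by nlinarith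
      have hstep3 : 1 - m ^ 2 / Lk ^ 2 ≤ C := by
        rw [← hC]
        have h4 : m ^ 2 / L ^ 2 ≤ m ^ 2 / Lk ^ 2 := by
          apply div_le_div_of_nonneg_left (by positivity) (by positivity)
          nlinarith
        linarith
      linarith
    have hsq := CLaux.step_norm_sq hMh (η k) C hquad (e k)
    rw [← hupd k] at hsq
    calc ‖e (k + 1)‖ = Real.sqrt (‖e (k + 1)‖ ^ 2) := by
          rw [Real.sqrt_sq (norm_nonneg _)]
      _ ≤ Real.sqrt (C * ‖e k‖ ^ 2) := Real.sqrt_le_sqrt hsq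
      _ = Real.sqrt C * ‖e k‖ := by
          rw [Real.sqrt_mul hC0, Real.sqrt_sq (norm_nonneg _)]
  -- induction
  intro k
  induction k with
  | zero => simp
  | succ n ih =>
    calc ‖e (n + 1)‖ ≤ Real.sqrt C * ‖e n‖ := hstep n
      _ ≤ Real.sqrt C * (Real.sqrt C ^ n * ‖e 0‖) :=
          mul_le_mul_of_nonneg_left ih (Real.sqrt_nonneg _)
      _ = Real.sqrt C ^ (n + 1) * ‖e 0‖ := by ring
end

section
/- Let V : ℝ≥0 → ℝ≥0 be a continuously differentiable function satisfying V'(t) ≤ −K V(t)^α + β for constants K > 0, 0 < α < 1, β ≥ 0, and let 0 < γ < 1. Then for all t ≥ t* := V(0)^{1−α}/(K γ (1−α)), it holds that V(t)^α ≤ β/((1−γ)K). -/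
/-- Invariance of a sublevel set: if `V' x < 0` whenever `V x > C` (for `x ≥ 0`),
then `V s ≤ C` implies `V t ≤ C` for all `t ≥ s ≥ 0`. -/
lemma finite_time_convergence_invariant (V V' : ℝ → ℝ) (C : ℝ)
    (hd : ∀ x, 0 ≤ x → HasDerivAt V (V' x) x)
    (hlt : ∀ x, 0 ≤ x → C < V x → V' x < 0)
    (s t : ℝ) (hs : 0 ≤ s) (hst : s ≤ t) (hVs : V s ≤ C) : V t ≤ C := by
  refine le_of_forall_pos_le_add fun ε hε => ?_
  have hcont : ContinuousOn V (Set.Icc s t) := fun x hx =>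
    (hd x (hs.trans hx.1)).continuousAt.continuousWithinAt
  have := image_le_of_deriv_right_lt_deriv_boundary (f := V) (f' := V') (a := s) (b := t)
    hcont (fun x hx => (hd x (hs.trans hx.1)).hasDerivWithinAt)
    (B := fun _ => C + ε) (B' := fun _ => (0 : ℝ))
    (show V s ≤ C + ε by linarith) (fun x => hasDerivAt_const x (C + ε))
    (fun x hx hVx => hlt x (hs.trans hx.1) (by linarith))
  exact this (Set.right_mem_Icc.2 hst)

/-- Finite-time convergence lemma: if `V ≥ 0` is differentiable with
`V'(t) ≤ −K V(t)^α + β` for `K > 0`, `0 < α < 1`, `β ≥ 0`, and `0 < γ < 1`, then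
for all `t ≥ t* := V(0)^{1−α}/(K γ (1−α))` one has `V(t)^α ≤ β/((1−γ)K)`. -/
theorem finite_time_convergence (V V' : ℝ → ℝ) (K α β γ : ℝ)
    (hK : 0 < K) (hα : 0 < α) (hα1 : α < 1) (hβ : 0 ≤ β) (hγ : 0 < γ) (hγ1 : γ < 1)
    (hVnn : ∀ t, 0 ≤ t → 0 ≤ V t)
    (hderiv : ∀ t, 0 ≤ t → HasDerivAt V (V' t) t)
    (hineq : ∀ t, 0 ≤ t → V' t ≤ -K * (V t) ^ α + β) :
    ∀ t, (V 0) ^ (1 - α) / (K * γ * (1 - α)) ≤ t →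
      (V t) ^ α ≤ β / ((1 - γ) * K) := by
  intro t ht
  have h1γ : 0 < 1 - γ := by linarith
  have h1α : 0 < 1 - α := by linarith
  set B : ℝ := β / ((1 - γ) * K) with hBdef
  have hB0 : 0 ≤ B := div_nonneg hβ (by positivity)
  set C : ℝ := B ^ α⁻¹ with hCdef
  have hC0 : 0 ≤ C := Real.rpow_nonneg hB0 _
  have hCα : C ^ α = B := Real.rpow_inv_rpow hB0 (ne_of_gt hα)
  have hKC : K * C ^ α = β / (1 - γ) := by
    rw [hCα, hBdef]; field_simp
  set c : ℝ := K * γ * (1 - α) with hcdef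
  have hc : 0 < c := by positivity
  set tstar : ℝ := (V 0) ^ (1 - α) / c with htsdef
  have hts0 : 0 ≤ tstar := div_nonneg (Real.rpow_nonneg (hVnn 0 le_rfl) _) hc.le
  have ht0 : 0 ≤ t := hts0.trans ht
  -- key derivative sign fact
  have hlt : ∀ x, 0 ≤ x → C < V x → V' x < 0 := by
    intro x hx hCV
    have h1 : C ^ α < (V x) ^ α := Real.rpow_lt_rpow hC0 hCV hα
    have h2 : β / (1 - γ) < K * (V x) ^ α := by
      rw [← hKC]; exact (mul_lt_mul_iff_right₀ hK).2 h1
    have h3 : β ≤ β / (1 - γ) := by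
      rw [le_div_iff₀ h1γ]; nlinarith
    have := hineq x hx
    linarith
  -- Step 1: there exists s ∈ [0, tstar] with V s ≤ C
  have hexists : ∃ s, 0 ≤ s ∧ s ≤ tstar ∧ V s ≤ C := by
    by_contra hcon
    push_neg at hcon
    have hbig : ∀ x ∈ Set.Icc (0:ℝ) tstar, C < V x := by
      intro x hx
      exact hcon x hx.1 hx.2
    have hVpos : ∀ x ∈ Set.Icc (0:ℝ) tstar, 0 < V x := fun x hx =>
      lt_of_le_of_lt hC0 (hbig x hx)
    -- comparison on W = V ^ (1-α)
    set W : ℝ → ℝ := fun τ => V τ ^ (1 - α) with hWdef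
    have hWd : ∀ x ∈ Set.Ico (0:ℝ) tstar,
        HasDerivAt W (V' x * (1 - α) * V x ^ (1 - α - 1)) x := by
      intro x hx
      exact (hderiv x hx.1).rpow_const (Or.inl (ne_of_gt (hVpos x ⟨hx.1, hx.2.le⟩)))
    have hWcont : ContinuousOn W (Set.Icc 0 tstar) := by
      apply ContinuousOn.rpow_const
      · exact fun x hx => (hderiv x hx.1).continuousAt.continuousWithinAt
      · intro x hx; exact Or.inl (ne_of_gt (hVpos x hx))
    have hbound : ∀ x ∈ Set.Ico (0:ℝ) tstar,
        V' x * (1 - α) * V x ^ (1 - α - 1) ≤ -c := by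
      intro x hx
      have hVx : 0 < V x := hVpos x ⟨hx.1, hx.2.le⟩
      have h1 : C ^ α < (V x) ^ α := Real.rpow_lt_rpow hC0 (hbig x ⟨hx.1, hx.2.le⟩) hα
      have h3 : β ≤ β / (1 - γ) := by rw [le_div_iff₀ h1γ]; nlinarith
      have h2 : β ≤ (1 - γ) * K * (V x) ^ α := by
        have : β / (1 - γ) ≤ K * (V x) ^ α := by
          rw [← hKC]; exact (mul_le_mul_iff_right₀ hK).2 h1.le
        rw [div_le_iff₀ h1γ] at this; linarith [this]
      have hV' : V' x ≤ -(γ * K) * (V x) ^ α := by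
        have := hineq x hx.1; nlinarith
      have hpow : V x ^ (1 - α - 1) = (V x ^ α)⁻¹ := by
        rw [show (1 - α - 1 : ℝ) = -α by ring, Real.rpow_neg hVx.le]
      have hVα : 0 < V x ^ α := Real.rpow_pos_of_pos hVx _
      rw [hpow]
      rw [show V' x * (1 - α) * (V x ^ α)⁻¹ = V' x * ((1 - α) * (V x ^ α)⁻¹) by ring]
      have hfac : 0 < (1 - α) * (V x ^ α)⁻¹ := by positivity
      calc V' x * ((1 - α) * (V x ^ α)⁻¹)
          ≤ (-(γ * K) * (V x) ^ α) * ((1 - α) * (V x ^ α)⁻¹) :=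
            mul_le_mul_of_nonneg_right hV' hfac.le
        _ = -(γ * K * (1 - α)) * (V x ^ α * (V x ^ α)⁻¹) := by ring
        _ = -c := by rw [mul_inv_cancel₀ (ne_of_gt hVα)]; ring
    have hBd : ∀ x : ℝ, HasDerivAt (fun τ => V 0 ^ (1 - α) - c * τ) (-c) x := fun x => by
      simpa using (hasDerivAt_const x (V 0 ^ (1 - α))).fun_sub ((hasDerivAt_id x).const_mul c)
    have hfence := image_le_of_deriv_right_le_deriv_boundary (a := 0) (b := tstar)
      hWcont (fun x hx => (hWd x hx).hasDerivWithinAt)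
      (B := fun τ => V 0 ^ (1 - α) - c * τ) (B' := fun _ => -c)
      (by simp [hWdef])
      ((continuous_const.sub (continuous_const.mul continuous_id)).continuousOn)
      (fun x _ => (hBd x).hasDerivWithinAt)
      (fun x hx => hbound x hx)
    have hWts := hfence (Set.right_mem_Icc.2 hts0)
    have hct : c * tstar = V 0 ^ (1 - α) := by
      rw [htsdef, mul_div_cancel₀ _ (ne_of_gt hc)]
    have hWpos : 0 < W tstar :=
      Real.rpow_pos_of_pos (hVpos tstar (Set.right_mem_Icc.2 hts0)) _
    linarith
  obtain ⟨s, hs0, hsts, hVsC⟩ := hexists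
  have hVtC : V t ≤ C :=
    finite_time_convergence_invariant V V' C hderiv hlt s t hs0 (hsts.trans ht) hVsC
  calc (V t) ^ α ≤ C ^ α := Real.rpow_le_rpow (hVnn t ht0) hVtC hα.le
    _ = B := hCα
end
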